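/- Let R be an integral domain and G a finite group. Let P be a left R[G]-module which is finitely generated and projective as an R-module, projective as an R[G]-module, and which carries a G-invariant non-degenerate symmetric R-bilinear form. Let V be a left R[G]-module which is finitely generated and projective as an R-module. Then there is an R-module isomorphism Hom_R((V ⊗_R P)^G, R) ≅ (Hom_R(V, R) ⊗_R P)^G, where G acts diagonally on the tensor products and on Hom_R(V, R) by (g•f)(v) = f(g⁻¹•v). -/

import Mathlib

open scoped TensorProduct

section Aux

variable {R : Type*} [CommRing R] {G : Type*} [Group G] [Fintype G]

theorem aux_retract_bijective {A B A' B' : Type*} [AddCommGroup A] [AddCommGroup B]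
    [AddCommGroup A'] [AddCommGroup B'] [Module R A] [Module R B] [Module R A'] [Module R B']
    (φ : A →ₗ[R] B) (φ' : A' →ₗ[R] B')
    (iA : A →ₗ[R] A') (pA : A' →ₗ[R] A) (iB : B →ₗ[R] B') (pB : B' →ₗ[R] B)
    (hA : ∀ a, pA (iA a) = a) (hB : ∀ b, pB (iB b) = b)
    (h1 : ∀ a, iB (φ a) = φ' (iA a)) (h2 : ∀ a', pB (φ' a') = φ (pA a'))
    (hφ' : Function.Bijective φ') : Function.Bijective φ := by
  constructor
  · intro x y hxy
    have h : iA x = iA y := hφ'.1 (by rw [← h1, ← h1, hxy])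
    rw [← hA x, h, hA y]
  · intro b
    obtain ⟨a', ha'⟩ := hφ'.2 (iB b)
    exact ⟨pA a', by rw [← h2, ha', hB]⟩

theorem aux_exists_retract (M : Type*) [AddCommGroup M] [Module R M]
    (hfin : Module.Finite R M) (hproj : Module.Projective R M) :
    ∃ (n : ℕ) (i : M →ₗ[R] (Fin n → R)) (p : (Fin n → R) →ₗ[R] M), ∀ m, p (i m) = m := by
  obtain ⟨n, p, hp⟩ := Module.Finite.exists_fin' R M
  obtain ⟨i, hi⟩ := Module.projective_lifting_property p LinearMap.id hp
  exact ⟨n, i, p, fun m => by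
    have := LinearMap.congr_fun hi m
    simpa using this⟩

theorem aux_dualDistrib_bijective (M N : Type*) [AddCommGroup M] [AddCommGroup N]
    [Module R M] [Module R N] (hMf : Module.Finite R M) (hMp : Module.Projective R M)
    (hNf : Module.Finite R N) (hNp : Module.Projective R N) :
    Function.Bijective (TensorProduct.dualDistrib R M N) := by
  obtain ⟨n, iM, pM, hM⟩ := aux_exists_retract M hMf hMp
  obtain ⟨m, iN, pN, hN⟩ := aux_exists_retract N hNf hNp
  have hmapid : ∀ x : M ⊗[R] N,
      TensorProduct.map pM pN (TensorProduct.map iM iN x) = x := by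
    intro x
    induction x using TensorProduct.induction_on with
    | zero => simp
    | tmul a b => simp [hM, hN]
    | add a b ha hb => simp [ha, hb]
  refine aux_retract_bijective (A := Module.Dual R M ⊗[R] Module.Dual R N)
    (B := Module.Dual R (M ⊗[R] N))
    (A' := Module.Dual R (Fin n → R) ⊗[R] Module.Dual R (Fin m → R))
    (B' := Module.Dual R ((Fin n → R) ⊗[R] (Fin m → R)))
    (TensorProduct.dualDistrib R M N) (TensorProduct.dualDistrib R (Fin n → R) (Fin m → R))
    (TensorProduct.map pM.dualMap pN.dualMap)
    (TensorProduct.map iM.dualMap iN.dualMap)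
    ((TensorProduct.map pM pN).dualMap)
    ((TensorProduct.map iM iN).dualMap)
    ?_ ?_ ?_ ?_ ?_
  · intro a
    induction a using TensorProduct.induction_on with
    | zero => simp
    | tmul f g =>
        simp only [TensorProduct.map_tmul]
        congr 1 <;> ext x <;> simp [hM, hN]
    | add a b ha hb => simp [ha, hb]
  · intro b
    ext x
    simp [hM, hN]
  · intro a
    induction a using TensorProduct.induction_on with
    | zero => simp
    | tmul f g =>
        apply TensorProduct.ext'
        intro x y
        simp
    | add a b ha hb => simp [ha, hb]
  · intro a'
    induction a' using TensorProduct.induction_on with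
    | zero => simp
    | tmul f g =>
        apply TensorProduct.ext'
        intro x y
        simp
    | add a b ha hb => simp [ha, hb]
  · exact (TensorProduct.dualDistribEquivOfBasis (Pi.basisFun R (Fin n))
      (Pi.basisFun R (Fin m))).bijective

end Aux

set_option linter.unusedSectionVars false

section Aux2

variable {R : Type*} [CommRing R] {G : Type*} [Group G] [Fintype G]

theorem aux_asModule_smul {P : Type*} [AddCommGroup P] [Module R P]
    (ρ : Representation R G P) (a : MonoidAlgebra R G) (m : ρ.asModule) :
    a • m = ρ.asAlgebraHom a m := rfl

theorem aux_smul_single {P : Type*} [AddCommGroup P] [Module R P]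
    (ρ : Representation R G P) (g : G) (m : ρ.asModule) :
    (MonoidAlgebra.single g (1 : R) : MonoidAlgebra R G) • m = ρ g m := by
  rw [aux_asModule_smul, Representation.asAlgebraHom_single, one_smul]

theorem aux_asAlgebraHom_eq_sum {P : Type*} [AddCommGroup P] [Module R P]
    (ρ : Representation R G P) (a : MonoidAlgebra R G) (m : P) :
    ρ.asAlgebraHom a m = ∑ g : G, a.coeff g • ρ g m := by
  rw [Representation.asAlgebraHom_def, MonoidAlgebra.lift_apply]
  rw [Finsupp.sum_fintype]
  · simp [LinearMap.sum_apply]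
  · intro g; simp

theorem aux_higman {P : Type*} [AddCommGroup P] [Module R P] (ρ : Representation R G P)
    (h : Module.Projective (MonoidAlgebra R G) ρ.asModule) :
    ∃ s : P →ₗ[R] P, ∀ p : P, ∑ g : G, ρ g (s (ρ g⁻¹ p)) = p := by
  classical
  obtain ⟨σ, hσ⟩ := (Module.projective_def).mp h
  set S := MonoidAlgebra R G with hS
  haveI : IsScalarTower R S ρ.asModule := ⟨fun r a m => by
    show ρ.asAlgebraHom (r • a) m = r • (ρ.asAlgebraHom a m)
    rw [map_smul]
    rfl⟩
  let s : ρ.asModule →ₗ[R] ρ.asModule :=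
    (Finsupp.lsum ℕ fun m : ρ.asModule =>
      (LinearMap.toSpanSingleton R ρ.asModule m) ∘ₗ (Finsupp.lapply (1 : G) ∘ₗ (MonoidAlgebra.coeffLinearEquiv R).toLinearMap)) ∘ₗ
      (σ.restrictScalars R)
  have hs_apply : ∀ p : ρ.asModule, s p = (σ p).sum fun m a => (a.coeff (1 : G)) • m := by
    intro p
    simp only [s, LinearMap.coe_comp, Function.comp_apply, LinearMap.coe_restrictScalars,
      Finsupp.coe_lsum, LinearMap.coe_mk]
    rfl
  refine ⟨s, fun p => ?_⟩
  have key : ∀ g : G, σ (ρ g⁻¹ p) = (MonoidAlgebra.single g⁻¹ (1 : R) : S) • σ p := by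
    intro g
    rw [← aux_smul_single ρ g⁻¹ p]
    exact map_smul σ _ _
  have step1 : ∀ g : G,
      s (ρ g⁻¹ p) = (σ p).sum fun m a => (a.coeff g) • m := by
    intro g
    erw [hs_apply, key g, Finsupp.sum_smul_index']
    · congr 1
      funext m a
      have : ((MonoidAlgebra.single g⁻¹ (1 : R) : S) • a).coeff (1 : G) = a.coeff g := by
        show (MonoidAlgebra.single g⁻¹ (1 : R) * a).coeff (1 : G) = a.coeff g
        rw [MonoidAlgebra.coeff_single_mul_apply]
        simp
      rw [this]
    · intro m; simp
  calc ∑ g : G, ρ g (s (ρ g⁻¹ p))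
      = ∑ g : G, ((σ p).sum fun m a => (a.coeff g) • (ρ g m)) := by
        refine Finset.sum_congr rfl fun g _ => ?_
        erw [step1 g, map_finsuppSum]
        exact Finsupp.sum_congr fun m _ => map_smul (ρ g) _ _
    _ = (σ p).sum fun m a => ∑ g : G, (a.coeff g) • (ρ g m) := by
        show ∑ g : G, ∑ m ∈ (σ p).support, ((σ p) m).coeff g • ρ g m
            = ∑ m ∈ (σ p).support, ∑ g : G, ((σ p) m).coeff g • ρ g m
        exact Finset.sum_comm
    _ = ((σ p).sum fun m a => (a • m : ρ.asModule) : P) := by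
        congr 1
        funext m a
        rw [aux_asModule_smul]
        exact (aux_asAlgebraHom_eq_sum ρ a m).symm
    _ = @id P (Finsupp.linearCombination S (id : ρ.asModule → ρ.asModule) (σ p)) := by
        rw [Finsupp.linearCombination_apply]
        rfl
    _ = p := hσ p

end Aux2

set_option linter.unusedSectionVars false
set_option maxHeartbeats 800000

section Aux3

variable {R : Type*} [CommRing R] {G : Type*} [Group G] [Fintype G]

theorem aux_rho_inv_self {M : Type*} [AddCommGroup M] [Module R M]
    (ρ : Representation R G M) (g : G) (x : M) : ρ g⁻¹ (ρ g x) = x := by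
  rw [← Module.End.mul_apply, ← map_mul, inv_mul_cancel, map_one, Module.End.one_apply]

/-- Invariants are preserved by equivariant linear equivalences. -/
noncomputable def auxInvariantsCongr {M N : Type*} [AddCommGroup M] [Module R M]
    [AddCommGroup N] [Module R N]
    (ρM : Representation R G M) (ρN : Representation R G N) (e : M ≃ₗ[R] N)
    (he : ∀ (g : G) (m : M), e (ρM g m) = ρN g (e m)) :
    ρM.invariants ≃ₗ[R] ρN.invariants where
  toFun x := ⟨e x.1, fun g => by rw [← he g x.1, x.2 g]⟩
  map_add' x y := Subtype.ext (map_add e x.1 y.1)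
  map_smul' r x := Subtype.ext (map_smul e r x.1)
  invFun y := ⟨e.symm y.1, fun g => e.injective (by
    rw [he g (e.symm y.1), e.apply_symm_apply, y.2 g])⟩
  left_inv x := Subtype.ext (e.symm_apply_apply x.1)
  right_inv y := Subtype.ext (e.apply_symm_apply y.1)

/-- The norm pairing equivalence: if a representation admits a Higman-type map `s`,
then the dual of its invariants is the invariants of its dual. -/
noncomputable def auxTheta {M : Type*} [AddCommGroup M] [Module R M]
    (ρ : Representation R G M) (s : M →ₗ[R] M)
    (hs : ∀ x : M, ∑ g : G, ρ g (s (ρ g⁻¹ x)) = x) :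
    Module.Dual R ρ.invariants ≃ₗ[R] ρ.dual.invariants := by
  classical
  set Nm : M →ₗ[R] M := ∑ g : G, (ρ g : M →ₗ[R] M) with hNmdef
  have hNm_apply : ∀ m : M, Nm m = ∑ g : G, ρ g m := by
    intro m; simp [hNmdef, LinearMap.sum_apply]
  have hNm_mem : ∀ m : M, Nm m ∈ ρ.invariants := by
    intro m g
    rw [hNm_apply, map_sum]
    refine Fintype.sum_equiv (Equiv.mulLeft g) _ _ fun h => ?_
    rw [← Module.End.mul_apply, ← map_mul]
    rfl
  have hNm_rho : ∀ (g : G) (m : M), Nm (ρ g m) = Nm m := by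
    intro g m
    rw [hNm_apply, hNm_apply]
    refine Fintype.sum_equiv (Equiv.mulRight g) _ _ fun h => ?_
    rw [← Module.End.mul_apply, ← map_mul]
    rfl
  set Nm' : M →ₗ[R] ρ.invariants := Nm.codRestrict ρ.invariants hNm_mem with hNm'def
  have hNm'_apply : ∀ m : M, (Nm' m : M) = Nm m := fun m => rfl
  have hNs : ∀ x : M, x ∈ ρ.invariants → Nm (s x) = x := by
    intro x hx
    rw [hNm_apply]
    calc ∑ g : G, ρ g (s x) = ∑ g : G, ρ g (s (ρ g⁻¹ x)) := by
          refine Finset.sum_congr rfl fun g _ => ?_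
          rw [hx g⁻¹]
      _ = x := hs x
  -- the dual-invariance criterion
  have hdualmem : ∀ (f : Module.Dual R M),
      f ∈ ρ.dual.invariants ↔ ∀ (g : G) (m : M), f (ρ g m) = f m := by
    intro f
    constructor
    · intro hf g m
      have := hf g⁻¹
      have h2 : f (ρ (g⁻¹)⁻¹ m) = f m := by
        conv_rhs => rw [← this]
        rfl
      simpa using h2
    · intro hf g
      ext m
      show f (ρ g⁻¹ m) = f m
      exact hf g⁻¹ m
  refine LinearEquiv.ofLinear
    ({ toFun := fun ψ => ⟨(ψ : ρ.invariants →ₗ[R] R) ∘ₗ Nm', ?_⟩,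
       map_add' := ?_, map_smul' := ?_ })
    ({ toFun := fun f => (f : Module.Dual R M) ∘ₗ s ∘ₗ (Submodule.subtype ρ.invariants),
       map_add' := ?_, map_smul' := ?_ }) ?_ ?_
  · rw [hdualmem]
    intro g m
    simp only [LinearMap.coe_comp, Function.comp_apply]
    congr 1
    exact Subtype.ext (hNm_rho g m)
  · intro ψ φ; apply Subtype.ext; ext m; rfl
  · intro r ψ; apply Subtype.ext; ext m; rfl
  · intro f h; ext m; rfl
  · intro r f; ext m; rfl
  · -- Θ ∘ Ξ = id
    apply LinearMap.ext
    intro f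
    apply Subtype.ext
    apply LinearMap.ext
    intro m
    simp only [LinearMap.coe_comp, Function.comp_apply, LinearMap.coe_mk, AddHom.coe_mk,
      LinearMap.id_apply, Submodule.coe_subtype]
    show (f : Module.Dual R M) (s (Nm m)) = (f : Module.Dual R M) m
    have hf : ∀ (g : G) (x : M), (f : Module.Dual R M) (ρ g x) = (f : Module.Dual R M) x :=
      (hdualmem f.1).mp f.2
    have expand : (f : Module.Dual R M) m = ∑ g : G, (f : Module.Dual R M) (s (ρ g⁻¹ m)) := by
      conv_lhs => rw [← hs m]
      rw [map_sum]
      exact Finset.sum_congr rfl fun g _ => hf g _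
    rw [expand, hNm_apply, map_sum, map_sum]
    exact Fintype.sum_equiv (Equiv.inv G) _ _ fun g => by simp
  · -- Ξ ∘ Θ = id
    apply LinearMap.ext
    intro ψ
    apply LinearMap.ext
    intro x
    simp only [LinearMap.coe_comp, Function.comp_apply, LinearMap.coe_mk, AddHom.coe_mk,
      LinearMap.id_apply, Submodule.coe_subtype]
    show ψ (Nm' (s (x : M))) = ψ x
    congr 1
    exact Subtype.ext (hNs (x : M) x.2)

end Aux3

open scoped TensorProduct

section Main

variable {R : Type*} [CommRing R] {G : Type*} [Group G] [Fintype G]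

theorem aux_rho_inv_self' {M : Type*} [AddCommGroup M] [Module R M]
    (ρ : Representation R G M) (g : G) (x : M) : ρ g (ρ g⁻¹ x) = x := by
  rw [← Module.End.mul_apply, ← map_mul, mul_inv_cancel, map_one, Module.End.one_apply]

end Main

set_option maxHeartbeats 3000000 in

/-- Let `R` be an integral domain, `G` a finite group, `P` an `R[G]`-module which
is finitely generated projective over `R`, projective over `R[G]`, and carries a `G`-invariant
non-degenerate symmetric bilinear form; let `V` be an `R[G]`-module, finitely generated
projective over `R`.  Then `Hom_R((V ⊗_R P)^G, R) ≅ (Hom_R(V, R) ⊗_R P)^G` as `R`-modules,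
where `G` acts diagonally on the tensor products and contragradiently on `Hom_R(V, R)`. -/
theorem dual_of_twist_equiv_twist_of_dual
    {R : Type*} [CommRing R] [IsDomain R]
    {G : Type*} [Group G] [Fintype G]
    {P : Type*} [AddCommGroup P] [Module R P]
    {V : Type*} [AddCommGroup V] [Module R V]
    (ρP : Representation R G P) (ρV : Representation R G V)
    (hPfin : Module.Finite R P) (hPproj : Module.Projective R P)
    (hPprojG : Module.Projective (MonoidAlgebra R G) ρP.asModule)
    (t : P →ₗ[R] P →ₗ[R] R)
    (htsymm : ∀ x y : P, t x y = t y x)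
    (htG : ∀ (g : G) (x y : P), t (ρP g x) (ρP g y) = t x y)
    (htnd : Function.Bijective t)
    (hVfin : Module.Finite R V) (hVproj : Module.Projective R V) :
    Nonempty (Module.Dual R ((ρV.tprod ρP).invariants) ≃ₗ[R]
      (Representation.invariants (V := Module.Dual R V ⊗[R] P) (ρV.dual.tprod ρP))) := by
  classical
  obtain ⟨s, hs⟩ := aux_higman ρP hPprojG
  -- Higman map on V ⊗ P
  have hsM : ∀ x : V ⊗[R] P,
      ∑ g : G, (ρV.tprod ρP) g ((LinearMap.lTensor V s) ((ρV.tprod ρP) g⁻¹ x)) = x := by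
    intro x
    induction x using TensorProduct.induction_on with
    | zero => simp
    | tmul v p =>
        calc ∑ g : G, (ρV.tprod ρP) g ((LinearMap.lTensor V s) ((ρV.tprod ρP) g⁻¹ (v ⊗ₜ[R] p)))
            = ∑ g : G, v ⊗ₜ[R] (ρP g (s (ρP g⁻¹ p))) := by
              refine Finset.sum_congr rfl fun g _ => ?_
              simp only [Representation.tprod_apply, TensorProduct.map_tmul,
                LinearMap.lTensor_tmul]
              rw [aux_rho_inv_self' ρV g v]
          _ = v ⊗ₜ[R] (∑ g : G, ρP g (s (ρP g⁻¹ p))) := (TensorProduct.tmul_sum v _ _).symm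
          _ = v ⊗ₜ[R] p := by rw [hs p]
    | add a b ha hb =>
        simp only [map_add]
        rw [Finset.sum_add_distrib, ha, hb]
  -- Equivalence 1 : Dual of invariants ≃ invariants of dual
  let E1 : Module.Dual R ((ρV.tprod ρP).invariants) ≃ₗ[R] (ρV.tprod ρP).dual.invariants :=
    auxTheta (ρV.tprod ρP) (LinearMap.lTensor V s) hsM
  -- Equivalence 2 : (dual V ⊗ dual P) invariants ≃ (dual of V ⊗ P) invariants
  have hbij : Function.Bijective (TensorProduct.dualDistrib R V P) :=
    aux_dualDistrib_bijective V P hVfin hVproj hPfin hPproj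
  let eD : Module.Dual R V ⊗[R] Module.Dual R P ≃ₗ[R] Module.Dual R (V ⊗[R] P) :=
    LinearEquiv.ofBijective (TensorProduct.dualDistrib R V P) hbij
  have heD : ∀ (g : G) (x : Module.Dual R V ⊗[R] Module.Dual R P),
      eD ((ρV.dual.tprod ρP.dual) g x) = (ρV.tprod ρP).dual g (eD x) := by
    intro g x
    show TensorProduct.dualDistrib R V P ((ρV.dual.tprod ρP.dual) g x)
      = (ρV.tprod ρP).dual g (TensorProduct.dualDistrib R V P x)
    induction x using TensorProduct.induction_on with
    | zero => simp
    | tmul f h =>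
        apply TensorProduct.ext'
        intro v p
        simp only [Representation.tprod_apply, TensorProduct.map_tmul,
          TensorProduct.dualDistrib_apply]
        rfl
    | add a b ha hb => rw [map_add, map_add, map_add, ha, hb, map_add]
  let E2 : (Representation.invariants (V := Module.Dual R V ⊗[R] Module.Dual R P) (ρV.dual.tprod ρP.dual)) ≃ₗ[R] (ρV.tprod ρP).dual.invariants :=
    auxInvariantsCongr (M := Module.Dual R V ⊗[R] Module.Dual R P)
      (N := Module.Dual R (V ⊗[R] P)) (ρV.dual.tprod ρP.dual) ((ρV.tprod ρP).dual) eD heD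
  -- Equivalence 3 : (dual V ⊗ P) invariants ≃ (dual V ⊗ dual P) invariants via t
  let T : P ≃ₗ[R] Module.Dual R P := LinearEquiv.ofBijective t htnd
  have hT : ∀ (g : G) (p : P), T (ρP g p) = ρP.dual g (T p) := by
    intro g p
    show t (ρP g p) = ρP.dual g (t p)
    ext q
    show t (ρP g p) q = t p (ρP g⁻¹ q)
    conv_lhs => rw [← aux_rho_inv_self' ρP g q]
    exact htG g p (ρP g⁻¹ q)
  let eT : Module.Dual R V ⊗[R] P ≃ₗ[R] Module.Dual R V ⊗[R] Module.Dual R P :=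
    TensorProduct.congr (LinearEquiv.refl R (Module.Dual R V)) T
  have heT : ∀ (g : G) (x : Module.Dual R V ⊗[R] P),
      eT ((ρV.dual.tprod ρP) g x) = (ρV.dual.tprod ρP.dual) g (eT x) := by
    intro g x
    induction x using TensorProduct.induction_on with
    | zero => simp
    | tmul f p =>
        simp only [eT, Representation.tprod_apply, TensorProduct.map_tmul,
          TensorProduct.congr_tmul, LinearEquiv.refl_apply]
        rw [hT g p]
    | add a b ha hb => rw [map_add, map_add, map_add, ha, hb, map_add]
  let E3 : (Representation.invariants (V := Module.Dual R V ⊗[R] P) (ρV.dual.tprod ρP)) ≃ₗ[R] (Representation.invariants (V := Module.Dual R V ⊗[R] Module.Dual R P) (ρV.dual.tprod ρP.dual)) :=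
    auxInvariantsCongr (M := Module.Dual R V ⊗[R] P)
      (N := Module.Dual R V ⊗[R] Module.Dual R P) (ρV.dual.tprod ρP) (ρV.dual.tprod ρP.dual) eT heT
  exact ⟨E1 ≪≫ₗ E2.symm ≪≫ₗ E3.symm⟩
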